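/- R-linear convergence under a quadratic-plus-offset recursion: let 0 < ρ₀ < ρ < 1 and ξ > 0, and set σ = (ρ − ρ₀)/(2ξ). Suppose a nonnegative sequence dₖ satisfies dₖ₊₁ ≤ ρᵏρ₀σ + ξdₖ² for all k ≥ 0, and d₀ ≤ σ. Then dₖ ≤ ρᵏσ for all k ≥ 0. -/

import Mathlib

/-- R-linear convergence under a quadratic-plus-offset recursion. -/
theorem r_linear_convergence_quadratic_offset (d : ℕ → ℝ) (ρ ρ₀ ξ σ : ℝ)
    (hρ₀ : 0 < ρ₀) (hρ₀ρ : ρ₀ < ρ) (hρ : ρ < 1) (hξ : 0 < ξ)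
    (hσ : σ = (ρ - ρ₀) / (2 * ξ)) (hd : ∀ k, 0 ≤ d k)
    (hrec : ∀ k : ℕ, d (k + 1) ≤ ρ ^ k * ρ₀ * σ + ξ * d k ^ 2)
    (h0 : d 0 ≤ σ) :
    ∀ k : ℕ, d k ≤ ρ ^ k * σ := by
  have hσ0 : 0 ≤ σ := by
    rw [hσ]; apply div_nonneg <;> linarith
  have hρpos : 0 < ρ := lt_trans hρ₀ hρ₀ρ
  intro k
  induction k with
  | zero => simpa using h0
  | succ k ih =>
    have hρk1 : ρ ^ k ≤ 1 := pow_le_one₀ hρpos.le hρ.le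
    have hρk0 : 0 ≤ ρ ^ k := pow_nonneg hρpos.le k
    calc d (k + 1) ≤ ρ ^ k * ρ₀ * σ + ξ * d k ^ 2 := hrec k
      _ ≤ ρ ^ k * ρ₀ * σ + ξ * (ρ ^ k * σ) ^ 2 := by
          gcongr
          exact hd k
      _ = ρ ^ k * (ρ₀ * σ + ρ ^ k * (ξ * σ ^ 2)) := by ring
      _ ≤ ρ ^ k * (ρ₀ * σ + 1 * (ξ * σ ^ 2)) := by
          gcongr
      _ = ρ ^ k * (σ * (ρ₀ + ξ * σ)) := by ring
      _ ≤ ρ ^ k * (σ * ρ) := by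
          gcongr ρ ^ k * (σ * ?_)
          rw [hσ]
          have : ξ * ((ρ - ρ₀) / (2 * ξ)) = (ρ - ρ₀) / 2 := by
            field_simp
          rw [this]; linarith
      _ = ρ ^ (k + 1) * σ := by ring
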